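/- arXiv:math/0702488 — 2 statements merged into one kernel-verified Lean document; each statement's English description precedes it below -/
import Mathlib

section
/- Let m be a nonzero integer and let d = gcd(a₁,…,aₙ,m) divide b. Then the congruence a₁x₁ + ⋯ + aₙxₙ ≡ b (mod m) has exactly d·|m|^(n−1) solutions in (ZMod |m|)ⁿ. -/
lemma exists_sum_eq_gcd {n : ℕ} (a : Fin n → ℤ) (s : Finset (Fin n)) :
    ∃ c : Fin n → ℤ, ∑ i ∈ s, c i * a i = s.gcd a := by
  classical
  induction s using Finset.induction_on with
  | empty => exact ⟨0, by simp⟩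
  | @insert j s hj ih =>
    obtain ⟨c, hc⟩ := ih
    set g := s.gcd a
    refine ⟨fun i => if i = j then Int.gcdA (a j) g else Int.gcdB (a j) g * c i, ?_⟩
    rw [Finset.sum_insert hj, Finset.gcd_insert]
    have hb := Int.gcd_eq_gcd_ab (a j) g
    have : ∑ i ∈ s, (if i = j then Int.gcdA (a j) g else Int.gcdB (a j) g * c i) * a i
        = Int.gcdB (a j) g * g := by
      rw [← hc, Finset.mul_sum]
      refine Finset.sum_congr rfl fun i hi => ?_
      have : i ≠ j := fun h => hj (h ▸ hi)
      simp [this]; ring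
    rw [this]
    rw [← Int.coe_gcd, hb]
    simp; ring


/-- If `m ≠ 0` and `d = gcd(a₁,…,aₙ,m) ∣ b`, the congruence `Σ aᵢxᵢ ≡ b (mod m)`
has exactly `d·|m|^(n−1)` solutions in `(ZMod |m|)ⁿ`. -/
theorem linear_congruence_card (n : ℕ) (hn : 1 ≤ n) (a : Fin n → ℤ) (b m : ℤ)
    (hm : m ≠ 0) (hd : (Int.gcd (Finset.univ.gcd a) m : ℤ) ∣ b) :
    Nat.card {x : Fin n → ZMod m.natAbs //
        ∑ i, (a i : ZMod m.natAbs) * x i = (b : ZMod m.natAbs)} =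
      Int.gcd (Finset.univ.gcd a) m * m.natAbs ^ (n - 1) := by
  classical
  set M := m.natAbs with hM
  have hM0 : M ≠ 0 := Int.natAbs_ne_zero.mpr hm
  haveI : NeZero M := ⟨hM0⟩
  set g : ℤ := Finset.univ.gcd a with hg
  set d : ℕ := Int.gcd g m with hd'
  -- the additive hom
  set f : (Fin n → ZMod M) →+ ZMod M :=
    { toFun := fun x => ∑ i, (a i : ZMod M) * x i
      map_zero' := by simp
      map_add' := by intro x y; simp [mul_add, Finset.sum_add_distrib] } with hf
  -- range f = zmultiples g
  have hrange : f.range = AddSubgroup.zmultiples ((g : ZMod M)) := by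
    apply le_antisymm
    · rintro _ ⟨x, rfl⟩
      have : f x = (g : ZMod M) * ∑ i, ((a i / g : ℤ) : ZMod M) * x i := by
        simp only [hf, AddMonoidHom.coe_mk, ZeroHom.coe_mk, Finset.mul_sum]
        refine Finset.sum_congr rfl fun i _ => ?_
        have hgi : g ∣ a i := Finset.gcd_dvd (Finset.mem_univ i)
        rw [← mul_assoc]
        congr 1
        rw [← Int.cast_mul, Int.mul_ediv_cancel' hgi]
      rw [AddSubgroup.mem_zmultiples_iff]
      obtain ⟨k, hk⟩ := ZMod.intCast_surjective (∑ i, ((a i / g : ℤ) : ZMod M) * x i)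
      exact ⟨k, by rw [zsmul_eq_mul, this, ← hk, mul_comm]⟩
    · rw [AddSubgroup.zmultiples_le]
      obtain ⟨c, hc⟩ := exists_sum_eq_gcd a Finset.univ
      refine ⟨fun i => ((c i : ℤ) : ZMod M), ?_⟩
      simp only [hf, AddMonoidHom.coe_mk, ZeroHom.coe_mk]
      rw [hg, ← hc]; push_cast; refine Finset.sum_congr rfl fun i _ => by ring
  -- b is in the range
  have hmzero : ((m : ℤ) : ZMod M) = 0 := by
    rw [ZMod.intCast_zmod_eq_zero_iff_dvd]
    exact Int.natAbs_dvd.mpr dvd_rfl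
  have hb : (b : ZMod M) ∈ f.range := by
    rw [hrange, AddSubgroup.mem_zmultiples_iff]
    obtain ⟨k, rfl⟩ := hd
    refine ⟨Int.gcdA g m * k, ?_⟩
    have := Int.gcd_eq_gcd_ab g m
    rw [zsmul_eq_mul]
    push_cast [this, hmzero]
    have h2 : ((d : ℤ) : ZMod M) = (g : ZMod M) * (Int.gcdA g m : ZMod M) := by
      rw [hd', this]; push_cast [hmzero]; ring
    rw [← Int.cast_natCast (R := ZMod M) d, h2]
    ring
  obtain ⟨x₀, hx₀⟩ := hb
  -- the solution set is equivalent to the kernel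
  have e : {x : Fin n → ZMod M // ∑ i, (a i : ZMod M) * x i = (b : ZMod M)} ≃ f.ker := by
    refine (Equiv.subtypeEquivRight fun x => ?_).trans (hx₀ ▸ f.fiberEquivKer x₀)
    simp [hf, Set.mem_preimage]
  -- cardinality of range
  have hdd : d = Nat.gcd g.natAbs M := rfl
  have hdvd : d ∣ M := hdd ▸ Nat.gcd_dvd_right _ _
  have hd0 : 0 < d := Int.gcd_pos_of_ne_zero_right g hm
  have hcard_range : Nat.card f.range = M / d := by
    rw [hrange, Nat.card_zmultiples]
    rcases Int.natAbs_eq g with h | h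
    · rw [h, Int.cast_natCast, ZMod.addOrderOf_coe _ hM0, hdd, Nat.gcd_comm]
    · rw [h, Int.cast_neg, Int.cast_natCast, addOrderOf_neg,
        ZMod.addOrderOf_coe _ hM0, hdd, Nat.gcd_comm]
  -- cardinality of domain
  have hcard_dom : Nat.card (Fin n → ZMod M) = M ^ n := by
    simp [Nat.card_pi, Nat.card_zmod]
  have hiso : Nat.card (Fin n → ZMod M) = Nat.card f.range * Nat.card f.ker := by
    rw [AddSubgroup.card_eq_card_quotient_mul_card_addSubgroup f.ker]
    congr 1
    exact Nat.card_congr (QuotientAddGroup.quotientKerEquivRange f).toEquiv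
  rw [Nat.card_congr e]
  have hMd : 0 < M / d := Nat.div_pos (Nat.le_of_dvd (Nat.pos_of_ne_zero hM0) hdvd) hd0
  have hMn : M ^ n = (M / d) * (d * M ^ (n - 1)) := by
    have h1 : M / d * d = M := Nat.div_mul_cancel hdvd
    have h2 : M ^ (n - 1 + 1) = M ^ (n - 1) * M := pow_succ M (n - 1)
    rw [Nat.sub_add_cancel hn] at h2
    calc M ^ n = M ^ (n - 1) * M := h2
      _ = M ^ (n - 1) * (M / d * d) := by rw [h1]
      _ = M / d * (d * M ^ (n - 1)) := by ring
  have key : (M / d) * Nat.card f.ker = (M / d) * (d * M ^ (n - 1)) := by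
    have h3 := hiso
    rw [hcard_dom, hcard_range] at h3
    exact h3.symm.trans hMn
  exact Nat.eq_of_mul_eq_mul_left hMd key
end

section
/- If the system of congruences aᵢ·x ≡ bᵢ (mod mᵢ), i = 1,…,r, with all mᵢ ≠ 0, has an integer solution, then gcd(aᵢ, mᵢ) ∣ bᵢ for each i, and gcd(aᵢmⱼ, aⱼmᵢ) divides aᵢbⱼ − aⱼbᵢ for all i, j. -/
/-- Necessary conditions for solvability of the system `aᵢ·x ≡ bᵢ (mod mᵢ)`. -/
theorem system_necessary_conditions (r : ℕ) (a b m : Fin r → ℤ)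
    (hm : ∀ i, m i ≠ 0) (h : ∃ x : ℤ, ∀ i, m i ∣ a i * x - b i) :
    (∀ i, (Int.gcd (a i) (m i) : ℤ) ∣ b i) ∧
    (∀ i j, (Int.gcd (a i * m j) (a j * m i) : ℤ) ∣ a i * b j - a j * b i) := by
  obtain ⟨x, hx⟩ := h
  constructor
  · intro i
    have h1 : (Int.gcd (a i) (m i) : ℤ) ∣ a i * x :=
      dvd_mul_of_dvd_left (Int.gcd_dvd_left _ _) x
    have h2 : (Int.gcd (a i) (m i) : ℤ) ∣ a i * x - b i :=
      dvd_trans (Int.gcd_dvd_right _ _) (hx i)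
    have := dvd_sub h1 h2
    simpa using this
  · intro i j
    have h1 : (Int.gcd (a i * m j) (a j * m i) : ℤ) ∣ a i * (a j * x - b j) :=
      dvd_trans (Int.gcd_dvd_left _ _) (by
        obtain ⟨c, hc⟩ := hx j
        exact ⟨c, by rw [hc]; ring⟩)
    have h2 : (Int.gcd (a i * m j) (a j * m i) : ℤ) ∣ a j * (a i * x - b i) :=
      dvd_trans (Int.gcd_dvd_right _ _) (by
        obtain ⟨c, hc⟩ := hx i
        exact ⟨c, by rw [hc]; ring⟩)
    have := dvd_sub h2 h1
    have heq : a j * (a i * x - b i) - a i * (a j * x - b j) = a i * b j - a j * b i := by ring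
    rwa [heq] at this
end
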